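/- Let f : ℕ → ℚ be a quasi-rational function, i.e., there exist a positive integer T and rational functions f_i/g_i with f_i, g_i ∈ ℤ[x] such that f(Tm+i) = f_i(m)/g_i(m) for all m ∈ ℕ and 0 ≤ i < T. If f(n) ∈ ℤ for every n ∈ ℕ, then f is an integer-valued quasi-polynomial. -/

import Mathlib

open Polynomial Filter

/-- A function `f : ℕ → ℤ` is an integer-valued quasi-polynomial if there exist a positive
integer `T` and polynomials `f₀, …, f_{T-1} ∈ ℤ[x]` with `f (T*m + i) = fᵢ(m)`. -/
def IsQuasiPoly (f : ℕ → ℤ) : Prop :=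
  ∃ T : ℕ, 0 < T ∧ ∃ p : ℕ → Polynomial ℤ,
    ∀ m i : ℕ, i < T → f (T * m + i) = (p i).eval (m : ℤ)

/-- A function `f : ℕ → ℚ` is quasi-rational if there exist a positive integer `T` and
rational functions `fᵢ/gᵢ` with `fᵢ, gᵢ ∈ ℤ[x]` (denominators nonvanishing on ℕ) such
that `f (T*m + i) = fᵢ(m)/gᵢ(m)`. -/
def IsQuasiRational (f : ℕ → ℚ) : Prop :=
  ∃ T : ℕ, 0 < T ∧ ∃ p q : ℕ → Polynomial ℤ,
    ∀ m i : ℕ, i < T →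
      (q i).eval (m : ℤ) ≠ 0 ∧
      f (T * m + i) = (((p i).eval (m : ℤ) : ℤ) : ℚ) / (((q i).eval (m : ℤ) : ℤ) : ℚ)


lemma exists_int_scale (h : Polynomial ℚ) :
    ∃ N : ℕ, 0 < N ∧ ∃ H : Polynomial ℤ,
      H.map (Int.castRingHom ℚ) = Polynomial.C (N : ℚ) * h := by
  induction h using Polynomial.induction_on' with
  | add p q hp hq =>
    obtain ⟨Np, hNp, Hp, hHp⟩ := hp
    obtain ⟨Nq, hNq, Hq, hHq⟩ := hq
    refine ⟨Np * Nq, Nat.mul_pos hNp hNq, C (Nq:ℤ) * Hp + C (Np:ℤ) * Hq, ?_⟩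
    rw [Polynomial.map_add, Polynomial.map_mul, Polynomial.map_mul, hHp, hHq,
      Polynomial.map_C, Polynomial.map_C]
    simp only [eq_intCast, Int.cast_natCast]
    rw [Nat.cast_mul, Polynomial.C_mul]
    ring
  | monomial n a =>
    refine ⟨a.den, a.pos, C a.num * X ^ n, ?_⟩
    have hden : (a.den : ℚ) * a = (a.num : ℚ) := by
      rw [mul_comm, Rat.mul_den_eq_num]
    rw [Polynomial.map_mul, Polynomial.map_pow, Polynomial.map_C, Polynomial.map_X]
    rw [← Polynomial.C_mul_X_pow_eq_monomial, ← mul_assoc, ← Polynomial.C_mul, hden]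
    simp

lemma refine_poly (h : Polynomial ℚ) (N : ℕ) (hN : 0 < N) (H : Polynomial ℤ)
    (hH : H.map (Int.castRingHom ℚ) = Polynomial.C (N : ℚ) * h) (s : ℕ) (z : ℤ)
    (hz : h.eval (s : ℚ) = (z : ℚ)) :
    ∃ P : Polynomial ℤ, ∀ m : ℕ, ((P.eval (m : ℤ) : ℤ) : ℚ) = h.eval ((N * m + s : ℕ) : ℚ) := by
  have hdvd : (C (N:ℤ) * X : Polynomial ℤ) ∣
      H.comp (C (N:ℤ) * X + C (s:ℤ)) - C (H.eval (s:ℤ)) := by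
    have h1 := Polynomial.sub_dvd_eval_sub (C (N:ℤ) * X + C (s:ℤ)) (C (s:ℤ)) (H.map C)
    simp only [add_sub_cancel_right] at h1
    rwa [Polynomial.eval_map, Polynomial.eval_map, ← Polynomial.comp, ← Polynomial.comp,
      Polynomial.comp_C] at h1
  obtain ⟨B, hB⟩ := hdvd
  refine ⟨C z + X * B, ?_⟩
  intro m
  have key : H.eval ((N:ℤ) * m + s) = H.eval (s:ℤ) + (N:ℤ) * m * B.eval (m:ℤ) := by
    have := congrArg (Polynomial.eval (m:ℤ)) hB
    simp only [Polynomial.eval_sub, Polynomial.eval_comp, Polynomial.eval_add,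
      Polynomial.eval_mul, Polynomial.eval_C, Polynomial.eval_X] at this
    linarith
  have hNz : ((H.eval (s:ℤ) : ℤ) : ℚ) = (N : ℚ) * z := by
    have h3 := congrArg (Polynomial.eval (((s:ℤ) : ℤ) : ℚ)) hH
    rw [Polynomial.eval_intCast_map, Polynomial.eval_mul, Polynomial.eval_C] at h3
    simp only [Int.coe_castRingHom] at h3
    push_cast at h3
    rw [h3, hz]
  have h2 : ((H.eval ((N:ℤ) * m + s) : ℤ) : ℚ) = (N:ℚ) * h.eval ((N * m + s : ℕ) : ℚ) := by
    have h3 := congrArg (Polynomial.eval ((((N * m + s : ℕ) : ℤ)) : ℚ)) hH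
    rw [Polynomial.eval_intCast_map, Polynomial.eval_mul, Polynomial.eval_C] at h3
    simp only [Int.coe_castRingHom] at h3
    push_cast at h3 ⊢
    exact h3
  have hNne : (N:ℚ) ≠ 0 := Nat.cast_ne_zero.mpr hN.ne'
  apply mul_left_cancel₀ hNne
  rw [← h2, key]
  simp only [Polynomial.eval_add, Polynomial.eval_mul, Polynomial.eval_C, Polynomial.eval_X]
  push_cast
  rw [hNz]
  ring

lemma exists_poly_of_rat (p q : Polynomial ℤ) (hq : ∀ m : ℕ, q.eval (m:ℤ) ≠ 0)
    (g : ℕ → ℚ) (hg : ∀ m : ℕ, g m = ((p.eval (m:ℤ) : ℤ) : ℚ) / ((q.eval (m:ℤ) : ℤ) : ℚ))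
    (hz : ∀ m : ℕ, ∃ z : ℤ, g m = (z : ℚ)) :
    ∃ h : Polynomial ℚ, ∀ m : ℕ, g m = h.eval ((m : ℕ) : ℚ) := by
  set P := p.map (Int.castRingHom ℚ) with hPdef
  set Q := q.map (Int.castRingHom ℚ) with hQdef
  have hPe : ∀ m : ℕ, P.eval ((m:ℕ):ℚ) = ((p.eval (m:ℤ) : ℤ) : ℚ) := by
    intro m
    have e := Polynomial.eval_natCast_map (Int.castRingHom ℚ) p m
    rw [hPdef, e]
    simp
  have hQe : ∀ m : ℕ, Q.eval ((m:ℕ):ℚ) = ((q.eval (m:ℤ) : ℤ) : ℚ) := by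
    intro m
    have e := Polynomial.eval_natCast_map (Int.castRingHom ℚ) q m
    rw [hQdef, e]
    simp
  have hQev : ∀ m : ℕ, Q.eval ((m:ℕ):ℚ) ≠ 0 := by
    intro m
    rw [hQe m]
    exact_mod_cast hq m
  have Qne : Q ≠ 0 := by
    intro h0
    exact hQev 0 (by simp [h0])
  have hPQ : Q * (P / Q) + P % Q = P := EuclideanDomain.div_add_mod P Q
  have hdeg : (P % Q).degree < Q.degree := EuclideanDomain.mod_lt P Qne
  have hgh : ∀ m : ℕ, g m - (P / Q).eval ((m:ℕ):ℚ)
      = (P % Q).eval ((m:ℕ):ℚ) / Q.eval ((m:ℕ):ℚ) := by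
    intro m
    have he := congrArg (Polynomial.eval ((m:ℕ):ℚ)) hPQ
    simp only [Polynomial.eval_add, Polynomial.eval_mul] at he
    rw [hg m, ← hPe, ← hQe, ← he]
    have hQ0 := hQev m
    field_simp
    ring
  obtain ⟨N, hN, Hh, hHh⟩ := exists_int_scale (P / Q)
  have hHev : ∀ m : ℕ, ((Hh.eval (m:ℤ) : ℤ) : ℚ) = (N:ℚ) * (P / Q).eval ((m:ℕ):ℚ) := by
    intro m
    have h3 := congrArg (Polynomial.eval (((m:ℤ) : ℤ) : ℚ)) hHh
    rw [Polynomial.eval_intCast_map, Polynomial.eval_mul, Polynomial.eval_C] at h3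
    simp only [Int.coe_castRingHom] at h3
    push_cast at h3 ⊢
    exact h3
  -- integrality of the scaled error seq
  have hint' : ∀ m : ℕ, ∃ k : ℤ, (k:ℚ) = (N:ℚ) * (g m - (P / Q).eval ((m:ℕ):ℚ)) := by
    intro m
    obtain ⟨z, hzm⟩ := hz m
    refine ⟨N * z - Hh.eval (m:ℤ), ?_⟩
    push_cast
    rw [hzm, hHev m]
    ring
  choose k hk using hint'
  -- analytic part
  set rr := (P % Q).map (algebraMap ℚ ℝ) with hrrdef
  set QQ := Q.map (algebraMap ℚ ℝ) with hQQdef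
  have hinj : Function.Injective (algebraMap ℚ ℝ) := (algebraMap ℚ ℝ).injective
  have hdegR : rr.degree < QQ.degree := by
    rw [Polynomial.degree_map_eq_of_injective hinj, Polynomial.degree_map_eq_of_injective hinj]
    exact hdeg
  have tend1 : Tendsto (fun x : ℝ => rr.eval x / QQ.eval x) atTop (nhds 0) :=
    Polynomial.div_tendsto_zero_of_degree_lt rr QQ hdegR
  have tend2 : Tendsto (fun m : ℕ => rr.eval ((m:ℕ):ℝ) / QQ.eval ((m:ℕ):ℝ)) atTop (nhds 0) :=
    tend1.comp tendsto_natCast_atTop_atTop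
  have hcastR : ∀ m : ℕ, ((g m - (P / Q).eval ((m:ℕ):ℚ) : ℚ) : ℝ)
      = rr.eval ((m:ℕ):ℝ) / QQ.eval ((m:ℕ):ℝ) := by
    intro m
    rw [hgh m]
    have e1 : rr.eval ((m:ℕ):ℝ) = (((P % Q).eval ((m:ℕ):ℚ) : ℚ) : ℝ) := by
      have : ((m:ℕ):ℝ) = algebraMap ℚ ℝ ((m:ℕ):ℚ) := by push_cast; simp
      rw [this, hrrdef, Polynomial.eval_map, Polynomial.eval₂_at_apply]
      rfl
    have e2 : QQ.eval ((m:ℕ):ℝ) = ((Q.eval ((m:ℕ):ℚ) : ℚ) : ℝ) := by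
      have : ((m:ℕ):ℝ) = algebraMap ℚ ℝ ((m:ℕ):ℚ) := by push_cast; simp
      rw [this, hQQdef, Polynomial.eval_map, Polynomial.eval₂_at_apply]
      rfl
    rw [e1, e2, Rat.cast_div]
  have tend3 : Tendsto (fun m : ℕ => ((k m : ℤ) : ℝ)) atTop (nhds 0) := by
    have : (fun m : ℕ => ((k m : ℤ) : ℝ))
        = fun m : ℕ => (N:ℝ) * (rr.eval ((m:ℕ):ℝ) / QQ.eval ((m:ℕ):ℝ)) := by
      funext m
      rw [← hcastR m]
      have := hk m
      have h4 : ((k m : ℚ) : ℝ) = (((N:ℚ) * (g m - (P / Q).eval ((m:ℕ):ℚ)) : ℚ) : ℝ) := by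
        exact_mod_cast congrArg (fun x : ℚ => (x : ℝ)) this
      push_cast at h4 ⊢
      linarith
    rw [this]
    have := tend2.const_mul (N:ℝ)
    simpa using this
  obtain ⟨M, hM⟩ := Metric.tendsto_atTop.mp tend3 1 one_pos
  have hk0 : ∀ m : ℕ, M ≤ m → k m = 0 := by
    intro m hm
    have := hM m hm
    rw [Real.dist_eq, sub_zero] at this
    have : |k m| < 1 := by exact_mod_cast (by rwa [← Int.cast_abs] at this : ((|k m| : ℤ) : ℝ) < 1)
    exact Int.abs_lt_one_iff.mp this
  have hroot : ∀ m : ℕ, M ≤ m → (P % Q).eval ((m:ℕ):ℚ) = 0 := by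
    intro m hm
    have h5 : (N:ℚ) * (g m - (P / Q).eval ((m:ℕ):ℚ)) = 0 := by
      rw [← hk m, hk0 m hm]; simp
    have hNne : (N:ℚ) ≠ 0 := Nat.cast_ne_zero.mpr hN.ne'
    have h6 : g m - (P / Q).eval ((m:ℕ):ℚ) = 0 := by
      rcases mul_eq_zero.mp h5 with h | h
      · exact absurd h hNne
      · exact h
    have h7 := hgh m
    rw [h6] at h7
    exact (div_eq_zero_iff.mp h7.symm).resolve_right (hQev m)
  have hr0 : P % Q = 0 := by
    apply Polynomial.eq_zero_of_infinite_isRoot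
    apply Set.infinite_of_injective_forall_mem (f := fun n : ℕ => (((M + n : ℕ)):ℚ))
    · intro a b hab
      have : (M + a : ℕ) = (M + b : ℕ) := Nat.cast_injective hab
      omega
    · intro n
      exact hroot (M + n) (Nat.le_add_right M n)
  refine ⟨P / Q, fun m => ?_⟩
  have := hgh m
  rw [hr0] at this
  simp only [Polynomial.eval_zero, zero_div] at this
  linarith

/-- If a quasi-rational function `f : ℕ → ℚ` takes integer values at every `n ∈ ℕ`,
then `f` is an integer-valued quasi-polynomial. -/
theorem quasiRational_integer_valued (f : ℕ → ℚ) (hf : IsQuasiRational f)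
    (hint : ∀ n : ℕ, ∃ z : ℤ, f n = (z : ℚ)) :
    ∃ F : ℕ → ℤ, IsQuasiPoly F ∧ ∀ n : ℕ, f n = (F n : ℚ) := by
  obtain ⟨T, hT, p, q, hpq⟩ := hf
  have H1 : ∀ i : ℕ, ∃ h : Polynomial ℚ, i < T → ∀ m : ℕ, f (T*m+i) = h.eval ((m:ℕ):ℚ) := by
    intro i
    by_cases hi : i < T
    · obtain ⟨h, hh⟩ := exists_poly_of_rat (p i) (q i) (fun m => (hpq m i hi).1)
        (fun m => f (T*m+i)) (fun m => (hpq m i hi).2) (fun m => hint _)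
      exact ⟨h, fun _ => hh⟩
    · exact ⟨0, fun h' => absurd h' hi⟩
  choose h hh using H1
  choose Nf hNf Hf hHf using fun i => exists_int_scale (h i)
  set N := ∏ i ∈ Finset.range T, Nf i with hNdef
  have hNpos : 0 < N := Finset.prod_pos (fun i _ => hNf i)
  have H3 : ∀ i, i < T → ∃ H : Polynomial ℤ,
      H.map (Int.castRingHom ℚ) = Polynomial.C (N:ℚ) * h i := by
    intro i hi
    obtain ⟨c, hc⟩ : (Nf i) ∣ N := Finset.dvd_prod_of_mem _ (Finset.mem_range.mpr hi)
    refine ⟨Polynomial.C (c:ℤ) * Hf i, ?_⟩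
    rw [Polynomial.map_mul, Polynomial.map_C, hHf i]
    simp only [eq_intCast, Int.cast_natCast]
    rw [hc, Nat.cast_mul, Polynomial.C_mul]
    ring
  have H4 : ∀ i' : ℕ, ∃ P : Polynomial ℤ, i' < T*N → ∀ m : ℕ,
      ((P.eval (m:ℤ) : ℤ) : ℚ) = (h (i' % T)).eval (((N * m + i' / T : ℕ)) : ℚ) := by
    intro i'
    by_cases hi' : i' < T*N
    · have hiT : i' % T < T := Nat.mod_lt _ hT
      obtain ⟨H, hH⟩ := H3 (i' % T) hiT
      obtain ⟨z, hzv⟩ := hint (T * (i' / T) + i' % T)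
      have hzv' : (h (i' % T)).eval ((i' / T : ℕ) : ℚ) = (z : ℚ) := by
        rw [← hh _ hiT (i' / T)]
        exact hzv
      obtain ⟨P, hP⟩ := refine_poly (h (i' % T)) N hNpos H hH (i' / T) z hzv'
      exact ⟨P, fun _ => hP⟩
    · exact ⟨0, fun hcon => absurd hcon hi'⟩
  choose Pp hPp using H4
  refine ⟨fun n => (hint n).choose, ⟨T*N, Nat.mul_pos hT hNpos, Pp, ?_⟩,
    fun n => (hint n).choose_spec⟩
  intro m i' hi'
  have harith : T * (N * m + i' / T) + i' % T = T*N*m + i' := by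
    have hd := Nat.div_add_mod i' T
    calc T * (N * m + i' / T) + i' % T = T*N*m + (T*(i'/T) + i'%T) := by ring
    _ = T*N*m + i' := by rw [hd]
  have hfn : f (T*N*m + i') = (((Pp i').eval (m:ℤ) : ℤ) : ℚ) := by
    rw [← harith, hh (i' % T) (Nat.mod_lt _ hT) (N * m + i' / T), hPp i' hi' m]
  have hcs := (hint (T*N*m+i')).choose_spec
  have : (((hint (T*N*m+i')).choose : ℤ) : ℚ) = (((Pp i').eval (m:ℤ) : ℤ) : ℚ) := by
    rw [← hcs, hfn]
  exact_mod_cast this
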